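/- Let (X, A, →) be an image-finite Segala system, i.e. an image-finite ULTraS over the commutative monoid (ℝ≥0, +, 0) of nonnegative reals such that every weight function φ with x →a φ is a probability distribution (Σ_{z ∈ X} φ z = 1). Then an equivalence relation R on X is a bisimulation (between the system and itself) if and only if it is a Segala–Lynch strong bisimulation: for all (x, y) ∈ R and every label a ∈ A, whenever x →a φ there exists ψ with y →a ψ such that Σ_{z ∈ E} φ z = Σ_{z ∈ E} ψ z for every R-equivalence class E ⊆ X, and symmetrically with the roles of x and y exchanged. -/
import Mathlib


open scoped Classical

/-- The sum of a finitely supported weight function over a set of states. -/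
noncomputable def sumOn {X W : Type*} [AddCommMonoid W] (φ : X →₀ W) (C : Set X) : W :=
  ∑ x ∈ φ.support, if x ∈ C then φ x else 0

/-- `(C, D)` belongs to the subset closure `R*` of the relation `R`. -/
def SubsetClosure {X Y : Type*} (R : X → Y → Prop) (C : Set X) (D : Set Y) : Prop :=
  ∀ x y, R x y → (x ∈ C → y ∈ D) ∧ (y ∈ D → x ∈ C)

/-- Weight functions `φ` and `ψ` are `R_W`-related. -/
def RW {X Y W : Type*} [AddCommMonoid W] (R : X → Y → Prop) (φ : X →₀ W) (ψ : Y →₀ W) :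
    Prop :=
  ∀ C D, SubsetClosure R C D → sumOn φ C = sumOn ψ D

/-- `R` is a bisimulation between two image-finite `W`-ULTraSs given by their
transition maps `trX`, `trY` (where `x →a ρ` iff `ρ ∈ trX x a`). -/
def IsBisimulation {X Y W A : Type*} [AddCommMonoid W]
    (trX : X → A → Finset (X →₀ W)) (trY : Y → A → Finset (Y →₀ W))
    (R : X → Y → Prop) : Prop :=
  ∀ x y, R x y → ∀ a : A,
    (∀ φ ∈ trX x a, ∃ ψ ∈ trY y a, RW R φ ψ) ∧
    (∀ ψ ∈ trY y a, ∃ φ ∈ trX x a, RW R φ ψ)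

lemma sumOn_eq_sum {X : Type*} (φ : X →₀ NNReal) {s : Finset X}
    (hs : φ.support ⊆ s) (C : Set X) :
    sumOn φ C = ∑ x ∈ s, if x ∈ C then φ x else 0 := by
  unfold sumOn
  refine Finset.sum_subset hs fun x _ hx => ?_
  simp [Finsupp.notMem_support_iff.mp hx]

lemma rw_of_classes {X : Type*} {R : X → X → Prop} (hR : Equivalence R)
    (φ ψ : X →₀ NNReal)
    (h : ∀ z, sumOn φ {w | R z w} = sumOn ψ {w | R z w}) :
    RW R φ ψ := by
  intro C D hCD
  letI st : Setoid X := ⟨R, hR⟩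
  set g : X → Quotient st := Quotient.mk st with hg
  have hCDiff : ∀ x, x ∈ C ↔ x ∈ D := fun x =>
    ⟨(hCD x x (hR.refl x)).1, (hCD x x (hR.refl x)).2⟩
  have hsat : ∀ x ∈ C, ∀ y, R x y → y ∈ C := fun x hx y hxy =>
    (hCDiff y).2 ((hCD x y hxy).1 hx)
  set s : Finset X := φ.support ∪ ψ.support with hs
  set T : Finset (Quotient st) := (s.filter (· ∈ C)).image g with hT
  have key : ∀ χ : X →₀ NNReal, χ.support ⊆ s →
      sumOn χ C = ∑ q ∈ T, sumOn χ {w | g w = q} := by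
    intro χ hχ
    rw [sumOn_eq_sum χ hχ C, ← Finset.sum_filter,
      ← Finset.sum_fiberwise_of_maps_to (g := g) (t := T)
        (fun x hx => Finset.mem_image_of_mem g hx)]
    refine Finset.sum_congr rfl fun q hq => ?_
    obtain ⟨c, hc, hcq⟩ := Finset.mem_image.mp hq
    have hcC : c ∈ C := (Finset.mem_filter.mp hc).2
    have hfil : (s.filter (· ∈ C)).filter (fun x => g x = q)
        = s.filter (fun x => g x = q) := by
      ext x
      simp only [Finset.mem_filter]
      constructor
      · rintro ⟨⟨hxs, _⟩, hxq⟩; exact ⟨hxs, hxq⟩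
      · rintro ⟨hxs, hxq⟩
        have hcx : R c x := Quotient.exact (hcq.trans hxq.symm)
        exact ⟨⟨hxs, hsat c hcC x hcx⟩, hxq⟩
    rw [hfil, sumOn_eq_sum χ hχ {w | g w = q}, Finset.sum_filter]
    exact Finset.sum_congr rfl fun x _ => by
      congr
  have hsub1 : φ.support ⊆ s := Finset.subset_union_left
  have hsub2 : ψ.support ⊆ s := Finset.subset_union_right
  have hD : sumOn ψ D = sumOn ψ C := by
    rw [sumOn_eq_sum ψ hsub2 D, sumOn_eq_sum ψ hsub2 C]
    refine Finset.sum_congr rfl fun x _ => ?_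
    by_cases hx : x ∈ C
    · simp [hx, (hCDiff x).mp hx]
    · have hxD : x ∉ D := fun h => hx ((hCDiff x).mpr h)
      simp [hx, hxD]
  rw [key φ hsub1, hD, key ψ hsub2]
  refine Finset.sum_congr rfl fun q hq => ?_
  obtain ⟨c, _, hcq⟩ := Finset.mem_image.mp hq
  have hset : {w | g w = q} = {w | R c w} := by
    ext w
    simp only [Set.mem_setOf_eq, ← hcq]
    exact ⟨fun hw => Quotient.exact hw.symm, fun hw => (Quotient.sound hw).symm⟩
  rw [hset]
  exact h c

lemma subsetClosure_class {X : Type*} {R : X → X → Prop} (hR : Equivalence R)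
    (z : X) : SubsetClosure R {w | R z w} {w | R z w} := by
  intro u v huv
  exact ⟨fun h => hR.trans h huv, fun h => hR.trans h (hR.symm huv)⟩

/-- On image-finite Segala systems (ULTraSs over `ℝ≥0` whose weight functions are
probability distributions), an equivalence relation is a bisimulation iff it is a
Segala–Lynch strong bisimulation. -/
theorem bisimulation_iff_segala_bisimulation
    {X A : Type*}
    (tr : X → A → Finset (X →₀ NNReal))
    (hprob : ∀ x : X, ∀ a : A, ∀ φ ∈ tr x a, (∑ z ∈ φ.support, φ z) = 1)
    (R : X → X → Prop) (hR : Equivalence R) :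
    IsBisimulation tr tr R ↔
      ∀ x y, R x y → ∀ a : A,
        (∀ φ ∈ tr x a, ∃ ψ ∈ tr y a,
          ∀ z : X, sumOn φ {w | R z w} = sumOn ψ {w | R z w}) ∧
        (∀ ψ ∈ tr y a, ∃ φ ∈ tr x a,
          ∀ z : X, sumOn φ {w | R z w} = sumOn ψ {w | R z w}) := by
  constructor
  · intro hbis x y hxy a
    obtain ⟨h1, h2⟩ := hbis x y hxy a
    constructor
    · intro φ hφ
      obtain ⟨ψ, hψ, hrw⟩ := h1 φ hφ
      exact ⟨ψ, hψ, fun z => hrw _ _ (subsetClosure_class hR z)⟩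
    · intro ψ hψ
      obtain ⟨φ, hφ, hrw⟩ := h2 ψ hψ
      exact ⟨φ, hφ, fun z => hrw _ _ (subsetClosure_class hR z)⟩
  · intro h x y hxy a
    obtain ⟨h1, h2⟩ := h x y hxy a
    constructor
    · intro φ hφ
      obtain ⟨ψ, hψ, heq⟩ := h1 φ hφ
      exact ⟨ψ, hψ, rw_of_classes hR φ ψ heq⟩
    · intro ψ hψ
      obtain ⟨φ, hφ, heq⟩ := h2 ψ hψ
      exact ⟨φ, hφ, rw_of_classes hR φ ψ heq⟩
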